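/- Riesz energy is Lipschitz with respect to symmetric difference with balls: there exists a constant C(n,α) > 0, depending only on n and α ∈ (0,n), such that for every measurable set E ⊆ ℝⁿ with |E| = 1 and every z ∈ ℝⁿ, one has |Φ_α(B(z)) − Φ_α(E)| ≤ C(n,α) · |E Δ B(z)|, where B(z) is the ball of volume 1 centered at z. -/

import Mathlib

open MeasureTheory Metric Set Filter Bornology
open scoped ENNReal NNReal Pointwise

noncomputable section

/-- The set of points of Lebesgue density one of `E ⊆ ℝⁿ`. -/
def densityOnePoints (n : ℕ) (E : Set (EuclideanSpace ℝ (Fin n))) :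
    Set (EuclideanSpace ℝ (Fin n)) :=
  {x | Tendsto (fun ρ : ℝ => volume (E ∩ ball x ρ) / volume (ball x ρ))
        (nhdsWithin 0 (Ioi 0)) (nhds 1)}

/-- Minkowski sum `A ⊕ B_r = ⋃_{x ∈ A} B_r(x)`. -/
def minkSum (n : ℕ) (r : ℝ) (A : Set (EuclideanSpace ℝ (Fin n))) :
    Set (EuclideanSpace ℝ (Fin n)) :=
  ⋃ x ∈ A, ball x r

/-- The nonlocal Minkowski perimeter `Per_r(E) = (1/(2r)) |(∂E) ⊕ B_r|`, where `∂E`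
is the topological boundary of the density-one representative of `E`. -/
def perR (n : ℕ) (r : ℝ) (E : Set (EuclideanSpace ℝ (Fin n))) : ℝ≥0∞ :=
  volume (minkSum n r (frontier (densityOnePoints n E))) / ENNReal.ofReal (2 * r)

/-- The inner set `E ⊖ B_r = E \ ((∂E) ⊕ B_r)` (for the density-one representative). -/
def minkSub (n : ℕ) (r : ℝ) (E : Set (EuclideanSpace ℝ (Fin n))) :
    Set (EuclideanSpace ℝ (Fin n)) :=
  densityOnePoints n E \ minkSum n r (frontier (densityOnePoints n E))

/-- The Riesz energy `Φ_α(E) = ∫_E ∫_E |x-y|^{-α} dx dy`. -/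
def rieszEnergy (n : ℕ) (α : ℝ) (E : Set (EuclideanSpace ℝ (Fin n))) : ℝ≥0∞ :=
  ∫⁻ x in E, ∫⁻ y in E, edist x y ^ (-α)

/-- The radius of the ball in `ℝⁿ` with unit volume. -/
def unitRadius (n : ℕ) : ℝ :=
  (volume (ball (0 : EuclideanSpace ℝ (Fin n)) 1)).toReal ^ (-(n : ℝ)⁻¹)

/-- A rigid motion of `ℝⁿ`: a rotation followed by a translation. -/
def IsRigidMotion (n : ℕ) (g : EuclideanSpace ℝ (Fin n) → EuclideanSpace ℝ (Fin n)) : Prop :=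
  ∃ (R : EuclideanSpace ℝ (Fin n) ≃ₗᵢ[ℝ] EuclideanSpace ℝ (Fin n))
    (v : EuclideanSpace ℝ (Fin n)),
    LinearMap.det (R.toLinearEquiv : EuclideanSpace ℝ (Fin n) →ₗ[ℝ] EuclideanSpace ℝ (Fin n)) = 1 ∧
    ∀ x, g x = R x + v


lemma rpow_neg_anti {x y : ℝ≥0∞} {α : ℝ} (hα : 0 < α) (hxy : x ≤ y) :
    y ^ (-α) ≤ x ^ (-α) := by
  rw [ENNReal.rpow_neg, ENNReal.rpow_neg]
  exact ENNReal.inv_le_inv.2 (ENNReal.rpow_le_rpow hxy hα.le)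

lemma ofReal_half_pow (m : ℕ) :
    ENNReal.ofReal ((2⁻¹:ℝ) ^ m) = (2:ℝ≥0∞) ^ (-(m:ℝ)) := by
  have h2inv : ENNReal.ofReal (2⁻¹:ℝ) = (2:ℝ≥0∞)⁻¹ := by
    rw [ENNReal.ofReal_inv_of_pos (by norm_num)]; norm_num
  rw [ENNReal.ofReal_pow (by norm_num), h2inv, ← ENNReal.rpow_natCast,
    ENNReal.inv_rpow, ← ENNReal.rpow_neg]

lemma aux_finite (n : ℕ) (hn : 1 ≤ n) (α : ℝ) (hα : 0 < α) (hαn : α < n) :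
    ∫⁻ y in ball (0 : EuclideanSpace ℝ (Fin n)) 1, edist 0 y ^ (-α) < ⊤ := by
  haveI : Nontrivial (EuclideanSpace ℝ (Fin n)) :=
    Module.nontrivial_of_finrank_pos
      (R := ℝ) (by rw [finrank_euclideanSpace_fin]; omega)
  set H := EuclideanSpace ℝ (Fin n)
  set v1 : ℝ≥0∞ := volume (ball (0 : H) 1) with hv1
  have hv1top : v1 < ⊤ := measure_ball_lt_top
  set A : ℕ → Set H := fun k => ball 0 ((2⁻¹ : ℝ) ^ k) \ ball 0 ((2⁻¹ : ℝ) ^ (k + 1)) with hA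
  have hcover : ball (0 : H) 1 \ {0} ⊆ ⋃ k, A k := by
    intro y ⟨hy1, hy0⟩
    have hy0' : 0 < ‖y‖ := by
      exact norm_pos_iff.2 (by simpa using (hy0 : y ∉ ({0} : Set H)))
    have hy1' : ‖y‖ < 1 := mem_ball_zero_iff.1 hy1
    have hex : ∃ m, (2⁻¹ : ℝ) ^ m ≤ ‖y‖ := by
      obtain ⟨m, hm⟩ := exists_pow_lt_of_lt_one hy0' (by norm_num : (2⁻¹:ℝ) < 1)
      exact ⟨m, hm.le⟩
    set m := Nat.find hex with hm
    have hmle : (2⁻¹ : ℝ) ^ m ≤ ‖y‖ := Nat.find_spec hex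
    have hm0 : m ≠ 0 := by
      intro h
      rw [h] at hmle; simp at hmle; linarith
    refine mem_iUnion.2 ⟨m - 1, ?_, ?_⟩
    · have : ¬ ((2⁻¹ : ℝ) ^ (m-1) ≤ ‖y‖) := Nat.find_min hex (by omega)
      exact mem_ball_zero_iff.2 (by linarith [not_le.1 this])
    · intro hmem
      have := mem_ball_zero_iff.1 hmem
      have hmm : m - 1 + 1 = m := by omega
      rw [hmm] at this; linarith
  have hedist : ∀ y : H, edist (0:H) y = ENNReal.ofReal ‖y‖ := by
    intro y
    rw [edist_comm, edist_zero_right, ofReal_norm_eq_enorm]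
  have hball : ∀ k : ℕ, volume (ball (0:H) ((2⁻¹:ℝ) ^ k)) = (2:ℝ≥0∞) ^ (-((k:ℝ) * n)) * v1 := by
    intro k
    rw [Measure.addHaar_ball volume (0:H) (by positivity), finrank_euclideanSpace_fin,
      ← pow_mul, ofReal_half_pow]
    congr 2
    push_cast
    ring
  have hAk : ∀ k : ℕ, ∫⁻ y in A k, edist (0:H) y ^ (-α)
      ≤ (2:ℝ≥0∞) ^ (((k:ℝ) + 1) * α) * volume (ball (0:H) ((2⁻¹:ℝ) ^ k)) := by
    intro k
    have hmeas : MeasurableSet (A k) := (measurableSet_ball).diff measurableSet_ball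
    have hpt : ∀ y ∈ A k, edist (0:H) y ^ (-α) ≤ (2:ℝ≥0∞) ^ (((k:ℝ) + 1) * α) := by
      intro y hy
      have h1 : (2⁻¹ : ℝ) ^ (k+1) ≤ ‖y‖ := by
        by_contra h
        exact hy.2 (mem_ball_zero_iff.2 (not_le.1 h))
      have h2 : ENNReal.ofReal ((2⁻¹:ℝ) ^ (k+1)) ≤ edist (0:H) y := by
        rw [hedist]
        exact ENNReal.ofReal_le_ofReal h1
      calc edist (0:H) y ^ (-α) ≤ ENNReal.ofReal ((2⁻¹:ℝ) ^ (k+1)) ^ (-α) := rpow_neg_anti hα h2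
        _ = (2:ℝ≥0∞) ^ (((k:ℝ) + 1) * α) := by
            rw [ofReal_half_pow, ← ENNReal.rpow_mul]
            congr 1
            push_cast
            ring
    calc ∫⁻ y in A k, edist (0:H) y ^ (-α)
        ≤ ∫⁻ _ in A k, (2:ℝ≥0∞) ^ (((k:ℝ) + 1) * α) := setLIntegral_mono' hmeas hpt
      _ = (2:ℝ≥0∞) ^ (((k:ℝ) + 1) * α) * volume (A k) := setLIntegral_const _ _
      _ ≤ _ := by
          exact mul_le_mul_right (measure_mono diff_subset) _
  have hq : (2:ℝ≥0∞) ^ (α - n) < 1 :=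
    ENNReal.rpow_lt_one_of_one_lt_of_neg (by norm_num) (by linarith)
  calc ∫⁻ y in ball (0:H) 1, edist 0 y ^ (-α)
      = ∫⁻ y in ball (0:H) 1 \ {0}, edist 0 y ^ (-α) := by
        refine (setLIntegral_congr ?_).symm
        refine diff_ae_eq_self.2 ?_
        exact measure_mono_null inter_subset_right (measure_singleton 0)
    _ ≤ ∫⁻ y in ⋃ k, A k, edist (0:H) y ^ (-α) :=
        lintegral_mono' (Measure.restrict_mono hcover le_rfl) le_rfl
    _ ≤ ∑' k, ∫⁻ y in A k, edist (0:H) y ^ (-α) := lintegral_iUnion_le _ _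
    _ ≤ ∑' k : ℕ, (2:ℝ≥0∞) ^ (((k:ℝ) + 1) * α) * ((2:ℝ≥0∞) ^ (-((k:ℝ) * n)) * v1) := by
        refine ENNReal.tsum_le_tsum fun k => ?_
        rw [← hball k]; exact hAk k
    _ = ∑' k : ℕ, (2:ℝ≥0∞) ^ α * ((2:ℝ≥0∞) ^ (α - n)) ^ k * v1 := by
        congr 1; funext k
        rw [← ENNReal.rpow_natCast ((2:ℝ≥0∞) ^ (α - (n:ℝ))) k, ← ENNReal.rpow_mul,
          ← ENNReal.rpow_add _ _ (by norm_num) (by norm_num), ← mul_assoc,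
          ← ENNReal.rpow_add _ _ (by norm_num) (by norm_num)]
        congr 1
        ring
    _ = (2:ℝ≥0∞) ^ α * (1 - (2:ℝ≥0∞) ^ (α - n))⁻¹ * v1 := by
        rw [ENNReal.tsum_mul_right, ENNReal.tsum_mul_left, ENNReal.tsum_geometric, mul_assoc,
          ← mul_assoc]
    _ < ⊤ := by
        apply ENNReal.mul_lt_top (ENNReal.mul_lt_top ?_ ?_) hv1top
        · exact ENNReal.rpow_lt_top_of_nonneg hα.le (by norm_num)
        · rw [ENNReal.inv_lt_top]
          exact tsub_pos_of_lt hq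

def Cbound (n : ℕ) (α : ℝ) : ℝ≥0∞ :=
  (∫⁻ y in ball (0 : EuclideanSpace ℝ (Fin n)) 1, edist 0 y ^ (-α)) + 1

lemma inner_bound (n : ℕ) (α : ℝ) (hα : 0 < α)
    (x : EuclideanSpace ℝ (Fin n)) (G : Set (EuclideanSpace ℝ (Fin n)))
    (hG : MeasurableSet G) (hGv : volume G ≤ 1) :
    ∫⁻ y in G, edist x y ^ (-α) ≤ Cbound n α := by
  have hsplit : ∫⁻ y in G, edist x y ^ (-α)
      ≤ (∫⁻ y in G ∩ ball x 1, edist x y ^ (-α))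
        + ∫⁻ y in G \ ball x 1, edist x y ^ (-α) := by
    conv_lhs => rw [show G = (G ∩ ball x 1) ∪ (G \ ball x 1) from (inter_union_diff G _).symm]
    refine le_trans (lintegral_mono' (Measure.restrict_union_le _ _) le_rfl) ?_
    rw [lintegral_add_measure]
  have h1 : (∫⁻ y in G ∩ ball x 1, edist x y ^ (-α))
      ≤ ∫⁻ y in ball (0:EuclideanSpace ℝ (Fin n)) 1, edist 0 y ^ (-α) := by
    refine le_trans (lintegral_mono' (Measure.restrict_mono inter_subset_right le_rfl) le_rfl) ?_
    have hmp : MeasurePreserving (fun a : EuclideanSpace ℝ (Fin n) => a + x) volume volume :=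
      measurePreserving_add_right volume x
    have hemb : MeasurableEmbedding (fun a : EuclideanSpace ℝ (Fin n) => a + x) :=
      (MeasurableEquiv.addRight x).measurableEmbedding
    have := hmp.setLIntegral_comp_preimage_emb hemb
      (fun y => edist x y ^ (-α)) (ball x 1)
    rw [← this]
    have hpre : (fun a : EuclideanSpace ℝ (Fin n) => a + x) ⁻¹' ball x 1 = ball 0 1 := by
      ext a
      simp [mem_ball, dist_eq_norm]
    rw [hpre]
    refine le_of_eq (setLIntegral_congr_fun measurableSet_ball ?_)
    intro a _
    show edist x (a + x) ^ (-α) = edist 0 a ^ (-α)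
    congr 1
    calc edist x (a + x) = edist (0 + x) (a + x) := by rw [zero_add]
      _ = edist 0 a := edist_add_right 0 a x
      _ = edist (0:EuclideanSpace ℝ (Fin n)) a := rfl
  have h2 : (∫⁻ y in G \ ball x 1, edist x y ^ (-α)) ≤ 1 := by
    have hpt : ∀ y ∈ G \ ball x 1, edist x y ^ (-α) ≤ 1 := by
      intro y hy
      have hd : (1:ℝ) ≤ dist x y := by
        have := hy.2
        simp only [mem_ball, not_lt] at this
        rwa [dist_comm]
      have he : (1:ℝ≥0∞) ≤ edist x y := by
        rw [edist_dist]
        calc (1:ℝ≥0∞) = ENNReal.ofReal 1 := by simp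
          _ ≤ ENNReal.ofReal (dist x y) := ENNReal.ofReal_le_ofReal hd
      calc edist x y ^ (-α) ≤ (1:ℝ≥0∞) ^ (-α) := rpow_neg_anti hα he
        _ = 1 := ENNReal.one_rpow _
    calc (∫⁻ y in G \ ball x 1, edist x y ^ (-α))
        ≤ ∫⁻ _ in G \ ball x 1, (1:ℝ≥0∞) :=
          setLIntegral_mono' (hG.diff measurableSet_ball) hpt
      _ = volume (G \ ball x 1) := by rw [setLIntegral_const, one_mul]
      _ ≤ volume G := measure_mono diff_subset
      _ ≤ 1 := hGv
  calc ∫⁻ y in G, edist x y ^ (-α)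
      ≤ (∫⁻ y in G ∩ ball x 1, edist x y ^ (-α))
        + ∫⁻ y in G \ ball x 1, edist x y ^ (-α) := hsplit
    _ ≤ (∫⁻ y in ball (0:EuclideanSpace ℝ (Fin n)) 1, edist 0 y ^ (-α)) + 1 := add_le_add h1 h2
    _ = Cbound n α := rfl


lemma lintegral_split {α : Type*} [MeasurableSpace α] (μ : Measure α) (A B : Set α)
    (f : α → ℝ≥0∞) :
    ∫⁻ x in A, f x ∂μ ≤ (∫⁻ x in A ∩ B, f x ∂μ) + ∫⁻ x in A \ B, f x ∂μ := by
  conv_lhs => rw [show A = (A ∩ B) ∪ (A \ B) from (inter_union_diff A B).symm]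
  refine le_trans (lintegral_mono' (Measure.restrict_union_le _ _) le_rfl) ?_
  rw [lintegral_add_measure]

lemma energy_le (n : ℕ) (α : ℝ) (hα : 0 < α)
    (A B : Set (EuclideanSpace ℝ (Fin n)))
    (hA : MeasurableSet A) (hB : MeasurableSet B) (hAv : volume A ≤ 1) :
    rieszEnergy n α A ≤ rieszEnergy n α B + 2 * Cbound n α * volume (A \ B) := by
  have hk : Measurable (Function.uncurry
      (fun x y : EuclideanSpace ℝ (Fin n) => edist x y ^ (-α))) :=
    measurable_edist.pow_const _
  have hABv : volume (A ∩ B) ≤ 1 := le_trans (measure_mono inter_subset_left) hAv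
  -- term over A \ B
  have hterm2 : (∫⁻ x in A \ B, ∫⁻ y in A, edist x y ^ (-α)) ≤ Cbound n α * volume (A \ B) := by
    calc (∫⁻ x in A \ B, ∫⁻ y in A, edist x y ^ (-α))
        ≤ ∫⁻ _ in A \ B, Cbound n α :=
          setLIntegral_mono' (hA.diff hB) fun x _ => inner_bound n α hα x A hA hAv
      _ = Cbound n α * volume (A \ B) := setLIntegral_const _ _
  -- inner split for x ∈ A ∩ B
  have hinner : ∀ x : EuclideanSpace ℝ (Fin n),
      (∫⁻ y in A, edist x y ^ (-α))
        ≤ (∫⁻ y in B, edist x y ^ (-α)) + ∫⁻ y in A \ B, edist x y ^ (-α) := by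
    intro x
    refine le_trans (lintegral_split volume A B _) ?_
    exact add_le_add
      (lintegral_mono' (Measure.restrict_mono inter_subset_right le_rfl) le_rfl) le_rfl
  -- cross term
  have hcross : (∫⁻ x in A ∩ B, ∫⁻ y in A \ B, edist x y ^ (-α))
      ≤ Cbound n α * volume (A \ B) := by
    rw [lintegral_lintegral_swap (hk.aemeasurable)]
    calc (∫⁻ y in A \ B, ∫⁻ x in A ∩ B, edist x y ^ (-α))
        ≤ ∫⁻ _ in A \ B, Cbound n α := by
          refine setLIntegral_mono' (hA.diff hB) fun y _ => ?_
          have : (∫⁻ x in A ∩ B, edist x y ^ (-α)) = ∫⁻ x in A ∩ B, edist y x ^ (-α) := by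
            refine lintegral_congr fun x => by rw [edist_comm]
          rw [this]
          exact inner_bound n α hα y (A ∩ B) (hA.inter hB) hABv
      _ = Cbound n α * volume (A \ B) := setLIntegral_const _ _
  have hmeasB : Measurable fun x : EuclideanSpace ℝ (Fin n) =>
      ∫⁻ y in B, edist x y ^ (-α) :=
    Measurable.lintegral_prod_right hk
  calc rieszEnergy n α A
      ≤ (∫⁻ x in A ∩ B, ∫⁻ y in A, edist x y ^ (-α))
        + ∫⁻ x in A \ B, ∫⁻ y in A, edist x y ^ (-α) := lintegral_split _ _ _ _
    _ ≤ (∫⁻ x in A ∩ B, ((∫⁻ y in B, edist x y ^ (-α)) + ∫⁻ y in A \ B, edist x y ^ (-α)))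
        + Cbound n α * volume (A \ B) :=
        add_le_add (setLIntegral_mono' (hA.inter hB) fun x _ => hinner x) hterm2
    _ = (∫⁻ x in A ∩ B, ∫⁻ y in B, edist x y ^ (-α))
        + (∫⁻ x in A ∩ B, ∫⁻ y in A \ B, edist x y ^ (-α))
        + Cbound n α * volume (A \ B) := by
        rw [lintegral_add_left hmeasB]
    _ ≤ rieszEnergy n α B + Cbound n α * volume (A \ B) + Cbound n α * volume (A \ B) :=
        add_le_add (add_le_add
          (lintegral_mono' (Measure.restrict_mono inter_subset_right le_rfl) le_rfl)
          hcross) le_rfl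
    _ = rieszEnergy n α B + 2 * Cbound n α * volume (A \ B) := by ring

/-- The Riesz energy is Lipschitz with respect to the symmetric difference
with unit-volume balls. -/
theorem rieszEnergy_lipschitz_symmDiff (n : ℕ) (hn : 1 ≤ n) (α : ℝ) (hα : 0 < α)
    (hαn : α < n) :
    ∃ C : ℝ, 0 < C ∧
      ∀ (E : Set (EuclideanSpace ℝ (Fin n))) (z : EuclideanSpace ℝ (Fin n)),
        MeasurableSet E → volume E = 1 →
        rieszEnergy n α (ball z (unitRadius n)) ≤
            rieszEnergy n α E +
              ENNReal.ofReal C * volume (symmDiff E (ball z (unitRadius n))) ∧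
        rieszEnergy n α E ≤
            rieszEnergy n α (ball z (unitRadius n)) +
              ENNReal.ofReal C * volume (symmDiff E (ball z (unitRadius n))) := by
  haveI : Nontrivial (EuclideanSpace ℝ (Fin n)) :=
    Module.nontrivial_of_finrank_pos (R := ℝ) (by rw [finrank_euclideanSpace_fin]; omega)
  have hfin : Cbound n α ≠ ⊤ :=
    ENNReal.add_ne_top.2 ⟨(aux_finite n hn α hα hαn).ne, ENNReal.one_ne_top⟩
  have hone : (1:ℝ≥0∞) ≤ Cbound n α := le_add_self
  have hCb0 : Cbound n α ≠ 0 := (lt_of_lt_of_le zero_lt_one hone).ne'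
  have htr : 0 < (Cbound n α).toReal := ENNReal.toReal_pos hCb0 hfin
  set v1 : ℝ≥0∞ := volume (ball (0 : EuclideanSpace ℝ (Fin n)) 1) with hv1def
  have hv1pos : (0:ℝ≥0∞) < v1 := measure_ball_pos _ _ one_pos
  have hv1top : v1 ≠ ⊤ := measure_ball_lt_top.ne
  have htpos : 0 < v1.toReal := ENNReal.toReal_pos hv1pos.ne' hv1top
  have hrpos : 0 < unitRadius n := Real.rpow_pos_of_pos htpos _
  have hC : ENNReal.ofReal (2 * (Cbound n α).toReal) = 2 * Cbound n α := by
    rw [ENNReal.ofReal_mul (by norm_num), ENNReal.ofReal_ofNat, ENNReal.ofReal_toReal hfin]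
  refine ⟨2 * (Cbound n α).toReal, by positivity, ?_⟩
  intro E z hE hEvol
  have hball1 : volume (ball z (unitRadius n)) = 1 := by
    rw [Measure.addHaar_ball volume z hrpos.le, finrank_euclideanSpace_fin]
    have hpow : (unitRadius n) ^ n = (v1.toReal)⁻¹ := by
      unfold unitRadius
      rw [← Real.rpow_natCast (v1.toReal ^ (-(n:ℝ)⁻¹)) n, ← Real.rpow_mul htpos.le,
        show (-(n:ℝ)⁻¹ * n) = -1 by field_simp]
      exact Real.rpow_neg_one _
    rw [hpow, ENNReal.ofReal_inv_of_pos htpos, ENNReal.ofReal_toReal hv1top]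
    exact ENNReal.inv_mul_cancel hv1pos.ne' hv1top
  have hsub1 : ball z (unitRadius n) \ E ⊆ symmDiff E (ball z (unitRadius n)) := by
    intro a ha
    rw [Set.mem_symmDiff]
    exact Or.inr ⟨ha.1, ha.2⟩
  have hsub2 : E \ ball z (unitRadius n) ⊆ symmDiff E (ball z (unitRadius n)) := by
    intro a ha
    rw [Set.mem_symmDiff]
    exact Or.inl ⟨ha.1, ha.2⟩
  constructor
  · refine le_trans (energy_le n α hα (ball z (unitRadius n)) E measurableSet_ball hE hball1.le) ?_
    rw [hC]
    exact add_le_add le_rfl (mul_le_mul_right (measure_mono hsub1) _)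
  · refine le_trans (energy_le n α hα E (ball z (unitRadius n)) hE measurableSet_ball hEvol.le) ?_
    rw [hC]
    exact add_le_add le_rfl (mul_le_mul_right (measure_mono hsub2) _)
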